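/- arXiv:2406.00738 — 6 statements merged into one kernel-verified Lean document; each statement's English description precedes it below -/
import Mathlib

section
/- Let N ≥ 1, let γ ∈ [0,1), let K satisfy 0 ≤ K ≤ N, and suppose each per-arm transition kernel satisfies P_i(1,α,1) ≥ P_i(0,α,1) for every α ∈ {0,1}. Suppose the reward R : {0,1}^N × {0,1}^N → ℝ is monotone in the state, i.e., for every fixed action a the map s ↦ R(s,a) is monotone. Then for every t ≥ 0 the value-iteration iterate V_t is monotone: V_t(s) ≤ V_t(s') whenever s ≤ s' coordinatewise. -/
/-- Number of arms pulled by a binary action vector. -/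
def pulls {N : ℕ} (a : Fin N → Bool) : ℕ := ∑ i, if a i then 1 else 0

/-- The set of budget-feasible actions. -/
def feasible (N K : ℕ) : Finset (Fin N → Bool) :=
  Finset.univ.filter (fun a => pulls a ≤ K)

lemma feasible_nonempty (N K : ℕ) : (feasible N K).Nonempty :=
  ⟨fun _ => false, by simp [feasible, pulls]⟩

/-- Joint transition probability: product of per-arm kernels. -/
def jointP {N : ℕ} (P : Fin N → Bool → Bool → Bool → ℝ)
    (s a s' : Fin N → Bool) : ℝ :=
  ∏ i, P i (s i) (a i) (s' i)

/-- Value-iteration iterates for the RMAB with global rewards. -/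
noncomputable def Viter {N : ℕ} (P : Fin N → Bool → Bool → Bool → ℝ)
    (R : (Fin N → Bool) → (Fin N → Bool) → ℝ) (γ : ℝ) (K : ℕ) :
    ℕ → (Fin N → Bool) → ℝ
  | 0 => fun _ => 0
  | t + 1 => fun s =>
      (feasible N K).sup' (feasible_nonempty N K)
        (fun a => R s a + γ * ∑ s' : Fin N → Bool, jointP P s a s' * Viter P R γ K t s')

open Finset

/-- A function on Boolean vectors is monotone if flipping any coordinate to
`true` does not decrease it. -/
lemma monotone_of_flip {N : ℕ} {f : (Fin N → Bool) → ℝ}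
    (h : ∀ s i, f s ≤ f (Function.update s i true)) : Monotone f := by
  intro s t hst
  generalize hk : (univ.filter fun i => s i ≠ t i).card = k
  induction k generalizing s with
  | zero =>
    have hD : (univ.filter fun i => s i ≠ t i) = ∅ := card_eq_zero.mp hk
    have hst' : s = t := by
      funext i
      by_contra hne
      have : i ∈ (univ.filter fun i => s i ≠ t i) := by simp [hne]
      simp [hD] at this
    simp [hst']
  | succ k ih =>
    have hne : (univ.filter fun i => s i ≠ t i).Nonempty := by
      rw [← card_pos, hk]; omega
    obtain ⟨i, hi⟩ := hne
    have hsit : s i ≠ t i := by simpa using hi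
    have hsi : s i = false ∧ t i = true := by
      have := hst i
      revert this hsit; cases s i <;> cases t i <;> simp
    set s₁ := Function.update s i true with hs₁
    have hle : f s ≤ f s₁ := h s i
    have hs₁t : s₁ ≤ t := by
      intro j
      rcases eq_or_ne j i with rfl | hj
      · simp [s₁, hsi.2]
      · simpa [s₁, Function.update_of_ne hj] using hst j
    have hD : (univ.filter fun j => s₁ j ≠ t j) = (univ.filter fun j => s j ≠ t j).erase i := by
      ext j
      rcases eq_or_ne j i with rfl | hj
      · simp [s₁, hsi.2]
      · simp [s₁, Function.update_of_ne hj, hj]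
    have hcard : (univ.filter fun j => s₁ j ≠ t j).card = k := by
      rw [hD, card_erase_of_mem hi, hk]; rfl
    exact hle.trans (ih hs₁t hcard)

/-- Flipping one state coordinate from `false` to `true` does not decrease the
expected value of a monotone function under a coordinatewise stochastically
monotone product kernel. -/
lemma exp_mono_flip {N : ℕ} (P : Fin N → Bool → Bool → Bool → ℝ)
    (hPnonneg : ∀ i σ α σ', 0 ≤ P i σ α σ')
    (hPsum : ∀ i σ α, P i σ α false + P i σ α true = 1)
    (hPmono : ∀ i α, P i false α true ≤ P i true α true)
    (a : Fin N → Bool) (V : (Fin N → Bool) → ℝ) (hV : Monotone V)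
    (s : Fin N → Bool) (i : Fin N) :
    (∑ s' : Fin N → Bool, jointP P s a s' * V s') ≤
      ∑ s' : Fin N → Bool, jointP P (Function.update s i true) a s' * V s' := by
  rcases hsi : s i with _ | _
  case true =>
    have : Function.update s i true = s := by
      rw [← hsi]; exact Function.update_eq_self i s
    rw [this]
  case false =>
  set s₁ := Function.update s i true with hs₁
  rw [← sub_nonneg, ← Finset.sum_sub_distrib]
  set C : (Fin N → Bool) → ℝ := fun s' => ∏ j ∈ ({i} : Finset (Fin N))ᶜ, P j (s j) (a j) (s' j) with hC
  have hCnn : ∀ s', 0 ≤ C s' := fun s' => Finset.prod_nonneg fun j _ => hPnonneg _ _ _ _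
  have hfac : ∀ s' : Fin N → Bool,
      jointP P s₁ a s' * V s' - jointP P s a s' * V s'
      = C s' * ((P i true (a i) (s' i) - P i false (a i) (s' i)) * V s') := by
    intro s'
    have h1 : jointP P s₁ a s' = P i true (a i) (s' i) * C s' := by
      rw [jointP, Fintype.prod_eq_mul_prod_compl i]
      congr 1
      · simp [s₁]
      · apply Finset.prod_congr rfl
        intro j hj
        have hji : j ≠ i := by simpa using hj
        simp [s₁, Function.update_of_ne hji]
    have h2 : jointP P s a s' = P i false (a i) (s' i) * C s' := by
      rw [jointP, Fintype.prod_eq_mul_prod_compl i, hsi]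
    rw [h1, h2]; ring
  calc (0:ℝ) ≤ ∑ s' ∈ univ.filter (fun s' : Fin N → Bool => s' i = true),
        ((jointP P s₁ a s' * V s' - jointP P s a s' * V s')
          + (jointP P s₁ a (Function.update s' i false) * V (Function.update s' i false)
             - jointP P s a (Function.update s' i false) * V (Function.update s' i false))) := by
        apply Finset.sum_nonneg
        intro s' hs'
        have hs'i : s' i = true := by simpa using hs'
        set u := Function.update s' i false with hu
        have hCu : C u = C s' := by
          apply Finset.prod_congr rfl
          intro j hj
          have hji : j ≠ i := by simpa using hj
          simp [u, Function.update_of_ne hji]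
        have hd : P i true (a i) false - P i false (a i) false
            = -(P i true (a i) true - P i false (a i) true) := by
          have h1 := hPsum i true (a i)
          have h2 := hPsum i false (a i)
          linarith
        have huV : V u ≤ V s' := by
          apply hV
          intro j
          rcases eq_or_ne j i with rfl | hj
          · simp [u]
          · simp [u, Function.update_of_ne hj]
        rw [hfac, hfac]
        have hui : u i = false := by simp [u]
        rw [hs'i, hui, hCu, hd]
        have hdnn : 0 ≤ P i true (a i) true - P i false (a i) true := by
          have := hPmono i (a i); linarith
        have : C s' * ((P i true (a i) true - P i false (a i) true) * V s')
            + C s' * (-(P i true (a i) true - P i false (a i) true) * V u)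
            = C s' * ((P i true (a i) true - P i false (a i) true) * (V s' - V u)) := by ring
        rw [this]
        exact mul_nonneg (hCnn s') (mul_nonneg hdnn (by linarith))
    _ = ∑ s' : Fin N → Bool, (jointP P s₁ a s' * V s' - jointP P s a s' * V s') := by
        rw [Finset.sum_add_distrib]
        rw [← Finset.sum_filter_add_sum_filter_not univ (fun s' : Fin N → Bool => s' i = true)]
        congr 1
        apply Finset.sum_nbij' (i := fun s' => Function.update s' i false)
          (j := fun s' => Function.update s' i true)
        · intro s' hs'
          simp
        · intro s' hs'
          simp
        · intro s' hs'
          have hs'i : s' i = true := by simpa using hs'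
          rw [Function.update_idem, ← hs'i, Function.update_eq_self]
        · intro s' hs'
          have hs'i : ¬ s' i = true := by simpa using hs'
          have : s' i = false := by revert hs'i; cases s' i <;> simp
          rw [Function.update_idem, ← this, Function.update_eq_self]
        · intro s' hs'
          rfl

/-- Value iteration preserves monotonicity of the value function in the state. -/
theorem stmt_0 {N : ℕ} (hN : 1 ≤ N) (γ : ℝ) (hγ0 : 0 ≤ γ) (hγ1 : γ < 1)
    (K : ℕ) (hK : K ≤ N)
    (P : Fin N → Bool → Bool → Bool → ℝ)
    (hPnonneg : ∀ i σ α σ', 0 ≤ P i σ α σ')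
    (hPsum : ∀ i σ α, P i σ α false + P i σ α true = 1)
    (hPmono : ∀ i α, P i false α true ≤ P i true α true)
    (R : (Fin N → Bool) → (Fin N → Bool) → ℝ)
    (hR : ∀ a, Monotone (fun s => R s a)) :
    ∀ t, Monotone (Viter P R γ K t) := by
  intro t
  induction t with
  | zero => intro s₁ s₂ _; simp [Viter]
  | succ t ih =>
    intro s₁ s₂ hs
    simp only [Viter]
    apply Finset.sup'_le
    intro a ha
    refine le_trans ?_ (Finset.le_sup' _ ha)
    have h1 : R s₁ a ≤ R s₂ a := hR a hs
    have h2 : (∑ s' : Fin N → Bool, jointP P s₁ a s' * Viter P R γ K t s') ≤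
        ∑ s' : Fin N → Bool, jointP P s₂ a s' * Viter P R γ K t s' := by
      have := monotone_of_flip (f := fun s => ∑ s' : Fin N → Bool, jointP P s a s' * Viter P R γ K t s')
        (fun s i => exp_mono_flip P hPnonneg hPsum hPmono a _ ih s i)
      exact this hs
    have := mul_le_mul_of_nonneg_left h2 hγ0
    linarith
end

section
/- Let N ≥ 1 and suppose each per-arm transition kernel satisfies P_i(1,α,1) ≥ P_i(0,α,1) for every α ∈ {0,1}. Fix an action a ∈ {0,1}^N. If V : {0,1}^N → ℝ is monotone, then the map s ↦ Σ_{s' ∈ {0,1}^N} P(s,a,s') V(s') is monotone in s. -/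
lemma step_lemma {N : ℕ}
    (P : Fin N → Bool → Bool → Bool → ℝ)
    (hPnonneg : ∀ i σ α σ', 0 ≤ P i σ α σ')
    (hPsum : ∀ i σ α, P i σ α false + P i σ α true = 1)
    (hPmono : ∀ i α, P i false α true ≤ P i true α true)
    (a : Fin N → Bool)
    (V : (Fin N → Bool) → ℝ) (hV : Monotone V)
    (s : Fin N → Bool) (j : Fin N) :
    ∑ s' : Fin N → Bool, jointP P (Function.update s j false) a s' * V s'
      ≤ ∑ s' : Fin N → Bool, jointP P (Function.update s j true) a s' * V s' := by
  set e := Equiv.funSplitAt j Bool with he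
  have jp : ∀ (b b' : Bool) (r : {i : Fin N // i ≠ j} → Bool),
      jointP P (Function.update s j b) a (e.symm (b', r))
        = P j b (a j) b' * ∏ i : {i : Fin N // i ≠ j}, P i.1 (s i.1) (a i.1) (r i) := by
    intro b b' r
    unfold jointP
    rw [← Finset.mul_prod_erase Finset.univ _ (Finset.mem_univ j)]
    congr 1
    · simp [he, Equiv.funSplitAt_symm_apply]
    · rw [Finset.prod_subtype (Finset.univ.erase j)
        (p := fun i => i ≠ j) (by simp)]
      apply Finset.prod_congr rfl
      intro i _
      simp [he, Function.update_of_ne i.2, Equiv.funSplitAt_symm_apply, i.2]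
  have expand : ∀ b : Bool,
      (∑ s' : Fin N → Bool, jointP P (Function.update s j b) a s' * V s')
        = ∑ r : {i : Fin N // i ≠ j} → Bool,
            (∏ i : {i : Fin N // i ≠ j}, P i.1 (s i.1) (a i.1) (r i)) *
            (P j b (a j) false * V (e.symm (false, r))
              + P j b (a j) true * V (e.symm (true, r))) := by
    intro b
    rw [← Equiv.sum_comp e.symm, Fintype.sum_prod_type, Finset.sum_comm]
    apply Finset.sum_congr rfl
    intro r _
    rw [Fintype.sum_bool, jp, jp]
    ring
  rw [expand, expand]
  apply Finset.sum_le_sum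
  intro r _
  apply mul_le_mul_of_nonneg_left _ (Finset.prod_nonneg fun i _ => hPnonneg _ _ _ _)
  have hV01 : V (e.symm (false, r)) ≤ V (e.symm (true, r)) := by
    apply hV
    intro i
    by_cases h : i = j
    · subst h
      simp [he, Equiv.funSplitAt_symm_apply]
    · simp [he, Equiv.funSplitAt_symm_apply, h]
  have hqf : P j false (a j) false = 1 - P j false (a j) true := by
    have := hPsum j false (a j); linarith
  have hqt : P j true (a j) false = 1 - P j true (a j) true := by
    have := hPsum j true (a j); linarith
  rw [hqf, hqt]
  nlinarith [mul_le_mul_of_nonneg_right (hPmono j (a j)) (sub_nonneg.2 hV01)]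

/-- If the per-arm kernels are stochastically monotone in the state, then the
one-step expectation of a monotone function is monotone in the state. -/
theorem stmt_2 {N : ℕ} (hN : 1 ≤ N)
    (P : Fin N → Bool → Bool → Bool → ℝ)
    (hPnonneg : ∀ i σ α σ', 0 ≤ P i σ α σ')
    (hPsum : ∀ i σ α, P i σ α false + P i σ α true = 1)
    (hPmono : ∀ i α, P i false α true ≤ P i true α true)
    (a : Fin N → Bool)
    (V : (Fin N → Bool) → ℝ) (hV : Monotone V) :
    Monotone (fun s : Fin N → Bool => ∑ s' : Fin N → Bool, jointP P s a s' * V s') := by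
  have main : ∀ (D : Finset (Fin N)) (s t : Fin N → Bool), s ≤ t →
      (∀ i, s i ≠ t i → i ∈ D) →
      (∑ s' : Fin N → Bool, jointP P s a s' * V s')
        ≤ ∑ s' : Fin N → Bool, jointP P t a s' * V s' := by
    intro D
    induction D using Finset.induction with
    | empty =>
      intro s t _ h
      have : s = t := funext fun i => by
        by_contra hne
        exact absurd (h i hne) (Finset.notMem_empty i)
      rw [this]
    | @insert j D hjD ih =>
      intro s t hst h
      by_cases hstj : s j = t j
      · apply ih s t hst
        intro i hi
        rcases Finset.mem_insert.1 (h i hi) with h' | h'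
        · exact absurd (h' ▸ hstj) hi
        · exact h'
      · have hlt : s j < t j := lt_of_le_of_ne (hst j) hstj
        obtain ⟨hsj, htj⟩ := Bool.lt_iff.1 hlt
        have h1 : (∑ s' : Fin N → Bool, jointP P s a s' * V s')
            ≤ ∑ s' : Fin N → Bool, jointP P (Function.update s j true) a s' * V s' := by
          have := step_lemma P hPnonneg hPsum hPmono a V hV s j
          rwa [show Function.update s j false = s from by
            rw [← hsj]; exact Function.update_eq_self j s] at this
        refine h1.trans (ih (Function.update s j true) t ?_ ?_)
        · intro i
          by_cases hij : i = j
          · subst hij; simp [htj]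
          · simp only [Function.update_of_ne hij]; exact hst i
        · intro i hi
          have hij : i ≠ j := by
            intro hij; subst hij
            simp [htj] at hi
          rw [Function.update_of_ne hij] at hi
          rcases Finset.mem_insert.1 (h i hi) with h' | h'
          · exact absurd h' hij
          · exact h'
  intro s t hst
  exact main Finset.univ s t hst (fun i _ => Finset.mem_univ i)
end

section
/- Let N ≥ 1 and suppose each per-arm transition kernel satisfies P_i(1,α,1) ≥ P_i(0,α,1) for every α ∈ {0,1}. Fix an action a ∈ {0,1}^N. If V : {0,1}^N → ℝ is submodular, then the map s ↦ Σ_{s' ∈ {0,1}^N} P(s,a,s') V(s') is submodular in s. -/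
/-- Submodularity of a function on the Boolean cube (with coordinatewise ⊔, ⊓). -/
def Submod {N : ℕ} (f : (Fin N → Bool) → ℝ) : Prop :=
  ∀ x y, f (x ⊔ y) + f (x ⊓ y) ≤ f x + f y

open Finset

/-- Marginalization: pushforward of a product "measure" along coordinatewise maps. -/
lemma marg_aux {N : ℕ} {β : Type} [Fintype β] [DecidableEq β]
    (μ : Fin N → β → ℝ) (g : Fin N → β → Bool) (V : (Fin N → Bool) → ℝ) :
    ∑ z : Fin N → β, (∏ i, μ i (z i)) * V (fun i => g i (z i))
      = ∑ s' : Fin N → Bool,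
          (∏ i, ∑ b ∈ Finset.univ.filter (fun b => g i b = s' i), μ i b) * V s' := by
  have key : ∀ s' : Fin N → Bool,
      (∏ i, ∑ b ∈ Finset.univ.filter (fun b => g i b = s' i), μ i b)
        = ∑ z ∈ Finset.univ.filter
            (fun z : Fin N → β => (fun i => g i (z i)) = s'), ∏ i, μ i (z i) := by
    intro s'
    rw [Finset.prod_univ_sum]
    apply Finset.sum_congr
    · ext z
      simp [Fintype.mem_piFinset, funext_iff]
    · intros; rfl
  rw [← Finset.sum_fiberwise_of_maps_to
      (g := fun z : Fin N → β => (fun i => g i (z i)))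
      (fun z _ => Finset.mem_univ _) (fun z => (∏ i, μ i (z i)) * V (fun i => g i (z i)))]
  refine Finset.sum_congr rfl fun s' _ => ?_
  rw [key, Finset.sum_mul]
  refine Finset.sum_congr rfl fun z hz => ?_
  rw [(Finset.mem_filter.1 hz).2]

/-- The standard monotone coupling of two Bernoulli-type kernels. -/
def coup (p q p' q' : ℝ) : Bool × Bool → ℝ
  | (true, true) => min p q
  | (true, false) => p - min p q
  | (false, true) => q - min p q
  | (false, false) => min p' q'

/-- If the per-arm kernels are stochastically monotone in the state, then the
one-step expectation of a submodular function is submodular in the state. -/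
theorem stmt_3 {N : ℕ} (hN : 1 ≤ N)
    (P : Fin N → Bool → Bool → Bool → ℝ)
    (hPnonneg : ∀ i σ α σ', 0 ≤ P i σ α σ')
    (hPsum : ∀ i σ α, P i σ α false + P i σ α true = 1)
    (hPmono : ∀ i α, P i false α true ≤ P i true α true)
    (a : Fin N → Bool)
    (V : (Fin N → Bool) → ℝ) (hV : Submod V) :
    Submod (fun s : Fin N → Bool => ∑ s' : Fin N → Bool, jointP P s a s' * V s') := by
  intro x y
  simp only
  set μ : Fin N → Bool × Bool → ℝ := fun i =>
    coup (P i (x i) (a i) true) (P i (y i) (a i) true)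
         (P i (x i) (a i) false) (P i (y i) (a i) false) with hμ
  -- nonnegativity of the coupling
  have hμnn : ∀ i b, 0 ≤ μ i b := by
    intro i b
    obtain ⟨(_|_), (_|_)⟩ := b <;>
      simp only [hμ, coup] <;>
      [exact le_min (hPnonneg _ _ _ _) (hPnonneg _ _ _ _);
       linarith [min_le_right (P i (x i) (a i) true) (P i (y i) (a i) true),
         hPnonneg i (y i) (a i) true];
       linarith [min_le_left (P i (x i) (a i) true) (P i (y i) (a i) true),
         hPnonneg i (x i) (a i) true];
       exact le_min (hPnonneg _ _ _ _) (hPnonneg _ _ _ _)]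
  -- generic evaluation of filtered sums over Bool × Bool
  have hfilt : ∀ (i : Fin N) (pred : Bool × Bool → Prop) [DecidablePred pred],
      ∑ b ∈ Finset.univ.filter pred, μ i b
        = (if pred (false, false) then μ i (false, false) else 0)
          + (if pred (false, true) then μ i (false, true) else 0)
          + (if pred (true, false) then μ i (true, false) else 0)
          + (if pred (true, true) then μ i (true, true) else 0) := by
    intro i pred _
    rw [Finset.sum_filter, Fintype.sum_prod_type]
    simp [Fintype.sum_bool]
    ring
  -- per-arm marginal identities
  have hmargs : ∀ (i : Fin N) (c : Bool),
      (∑ b ∈ Finset.univ.filter (fun b : Bool × Bool => b.1 = c), μ i b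
          = P i (x i) (a i) c)
      ∧ (∑ b ∈ Finset.univ.filter (fun b : Bool × Bool => b.2 = c), μ i b
          = P i (y i) (a i) c)
      ∧ (∑ b ∈ Finset.univ.filter (fun b : Bool × Bool => (b.1 || b.2) = c), μ i b
          = P i (x i || y i) (a i) c)
      ∧ (∑ b ∈ Finset.univ.filter (fun b : Bool × Bool => (b.1 && b.2) = c), μ i b
          = P i (x i && y i) (a i) c) := by
    intro i c
    have hsx := hPsum i (x i) (a i)
    have hsy := hPsum i (y i) (a i)
    rcases le_total (P i (x i) (a i) true) (P i (y i) (a i) true) with hle | hle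
    · have e1 : min (P i (x i) (a i) true) (P i (y i) (a i) true)
          = P i (x i) (a i) true := min_eq_left hle
      have e2 : min (P i (x i) (a i) false) (P i (y i) (a i) false)
          = P i (y i) (a i) false := min_eq_right (by linarith)
      cases hxi : x i <;> cases hyi : y i <;> cases c <;>
        simp only [hxi, hyi] at hsx hsy hle e1 e2 ⊢ <;>
        refine ⟨?_, ?_, ?_, ?_⟩ <;>
        · rw [hfilt]
          simp only [hμ, coup, hxi, hyi]
          norm_num
          all_goals try simp only [e1, e2]
          all_goals linarith [hsx, hsy, hle, hPmono i (a i)]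
    · have e1 : min (P i (x i) (a i) true) (P i (y i) (a i) true)
          = P i (y i) (a i) true := min_eq_right hle
      have e2 : min (P i (x i) (a i) false) (P i (y i) (a i) false)
          = P i (x i) (a i) false := min_eq_left (by linarith)
      cases hxi : x i <;> cases hyi : y i <;> cases c <;>
        simp only [hxi, hyi] at hsx hsy hle e1 e2 ⊢ <;>
        refine ⟨?_, ?_, ?_, ?_⟩ <;>
        · rw [hfilt]
          simp only [hμ, coup, hxi, hyi]
          norm_num
          all_goals try simp only [e1, e2]
          all_goals linarith [hsx, hsy, hle, hPmono i (a i)]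
  -- the four disintegrations
  have Hx : ∑ z : Fin N → Bool × Bool, (∏ i, μ i (z i)) * V (fun i => (z i).1)
      = ∑ s' : Fin N → Bool, jointP P x a s' * V s' := by
    rw [marg_aux]
    refine Finset.sum_congr rfl fun s' _ => ?_
    congr 1
    exact Finset.prod_congr rfl fun i _ => (hmargs i (s' i)).1
  have Hy : ∑ z : Fin N → Bool × Bool, (∏ i, μ i (z i)) * V (fun i => (z i).2)
      = ∑ s' : Fin N → Bool, jointP P y a s' * V s' := by
    rw [marg_aux]
    refine Finset.sum_congr rfl fun s' _ => ?_
    congr 1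
    exact Finset.prod_congr rfl fun i _ => (hmargs i (s' i)).2.1
  have Hor : ∑ z : Fin N → Bool × Bool, (∏ i, μ i (z i)) * V (fun i => (z i).1 || (z i).2)
      = ∑ s' : Fin N → Bool, jointP P (x ⊔ y) a s' * V s' := by
    rw [marg_aux μ (fun _ b => b.1 || b.2) V]
    refine Finset.sum_congr rfl fun s' _ => ?_
    congr 1
    refine Finset.prod_congr rfl fun i _ => ?_
    have : (x ⊔ y) i = (x i || y i) := rfl
    rw [this]
    exact (hmargs i (s' i)).2.2.1
  have Hand : ∑ z : Fin N → Bool × Bool, (∏ i, μ i (z i)) * V (fun i => (z i).1 && (z i).2)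
      = ∑ s' : Fin N → Bool, jointP P (x ⊓ y) a s' * V s' := by
    rw [marg_aux μ (fun _ b => b.1 && b.2) V]
    refine Finset.sum_congr rfl fun s' _ => ?_
    congr 1
    refine Finset.prod_congr rfl fun i _ => ?_
    have : (x ⊓ y) i = (x i && y i) := rfl
    rw [this]
    exact (hmargs i (s' i)).2.2.2
  rw [← Hx, ← Hy, ← Hor, ← Hand, ← Finset.sum_add_distrib, ← Finset.sum_add_distrib]
  refine Finset.sum_le_sum fun z _ => ?_
  have hFnn : (0:ℝ) ≤ ∏ i, μ i (z i) :=
    Finset.prod_nonneg fun i _ => hμnn i (z i)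
  have hsub := hV (fun i => (z i).1) (fun i => (z i).2)
  have e1 : ((fun i => (z i).1) ⊔ (fun i => (z i).2)) = fun i => (z i).1 || (z i).2 := rfl
  have e2 : ((fun i => (z i).1) ⊓ (fun i => (z i).2)) = fun i => (z i).1 && (z i).2 := rfl
  rw [e1, e2] at hsub
  nlinarith [mul_le_mul_of_nonneg_left hsub hFnn]
end

section
/- Let N ≥ 1 and suppose each per-arm transition kernel satisfies P_i(σ,1,1) ≥ P_i(σ,0,1) for every σ ∈ {0,1}. Fix a state s ∈ {0,1}^N. If V : {0,1}^N → ℝ is monotone, then the map a ↦ Σ_{s' ∈ {0,1}^N} P(s,a,s') V(s') is monotone in the action a. -/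
lemma monotone_of_update {N : ℕ} {f : (Fin N → Bool) → ℝ}
    (hf : ∀ a i, f (Function.update a i false) ≤ f (Function.update a i true)) :
    Monotone f := by
  have H : ∀ (n : ℕ) (a b : Fin N → Bool), a ≤ b →
      (Finset.univ.filter fun i => a i ≠ b i).card ≤ n → f a ≤ f b := by
    intro n
    induction n with
    | zero =>
      intro a b hab hcard
      have : a = b := by
        funext i
        by_contra h
        have : i ∈ Finset.univ.filter fun i => a i ≠ b i := by simp [h]
        have := Finset.card_pos.mpr ⟨i, this⟩
        omega
      rw [this]
    | succ n ih =>
      intro a b hab hcard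
      by_cases hab' : a = b
      · rw [hab']
      · have : ∃ i, a i ≠ b i := by
          by_contra h
          push_neg at h
          exact hab' (funext h)
        obtain ⟨i, hi⟩ := this
        have hia : a i = false ∧ b i = true := by
          have h := hab i
          cases ha' : a i <;> cases hb' : b i <;> rw [ha', hb'] at h <;> simp_all
          exact absurd h (by simp)
        set a' := Function.update a i true with ha'
        have h1 : f a ≤ f a' := by
          have : Function.update a i false = a := by
            rw [← hia.1]; exact Function.update_eq_self i a
          calc f a = f (Function.update a i false) := by rw [this]
            _ ≤ f (Function.update a i true) := hf a i
        have h2 : a' ≤ b := by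
          intro j
          by_cases hj : j = i
          · subst hj; simp [ha', hia.2]
          · simp [ha', Function.update_of_ne hj]; exact hab j
        have h3 : (Finset.univ.filter fun j => a' j ≠ b j).card ≤ n := by
          have hsub : (Finset.univ.filter fun j => a' j ≠ b j) ⊆
              (Finset.univ.filter fun j => a j ≠ b j).erase i := by
            intro j hj
            simp only [Finset.mem_filter, Finset.mem_univ, true_and] at hj
            have hji : j ≠ i := by
              intro h; subst h
              simp [ha', hia.2] at hj
            refine Finset.mem_erase.mpr ⟨hji, ?_⟩
            simp only [Finset.mem_filter, Finset.mem_univ, true_and]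
            rwa [ha', Function.update_of_ne hji] at hj
          have hmem : i ∈ Finset.univ.filter fun j => a j ≠ b j := by simp [hi]
          have := Finset.card_le_card hsub
          have := Finset.card_erase_of_mem hmem
          omega
        exact le_trans h1 (ih a' b h2 h3)
  intro a b hab
  exact H ((Finset.univ.filter fun i => a i ≠ b i).card) a b hab le_rfl

/-- If the per-arm kernels are stochastically monotone in the action, then the
one-step expectation of a monotone function is monotone in the action. -/
theorem stmt_4 {N : ℕ} (hN : 1 ≤ N)
    (P : Fin N → Bool → Bool → Bool → ℝ)
    (hPnonneg : ∀ i σ α σ', 0 ≤ P i σ α σ')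
    (hPsum : ∀ i σ α, P i σ α false + P i σ α true = 1)
    (hPmono : ∀ i σ, P i σ false true ≤ P i σ true true)
    (s : Fin N → Bool)
    (V : (Fin N → Bool) → ℝ) (hV : Monotone V) :
    Monotone (fun a : Fin N → Bool => ∑ s' : Fin N → Bool, jointP P s a s' * V s') := by
  apply monotone_of_update
  intro a i
  beta_reduce
  set e := Equiv.funSplitAt i Bool with he
  have hesymm : ∀ (b : Bool) (t : {j // j ≠ i} → Bool) (j : Fin N) (hj : j ≠ i),
      e.symm (b, t) j = t ⟨j, hj⟩ := by
    intro b t j hj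
    simp [he, Equiv.funSplitAt, Equiv.piSplitAt, hj]
  have hesymmi : ∀ (b : Bool) (t : {j // j ≠ i} → Bool), e.symm (b, t) i = b := by
    intro b t
    simp [he, Equiv.funSplitAt, Equiv.piSplitAt]
  have hsplit : ∀ (α : Bool) (s' : Fin N → Bool),
      jointP P s (Function.update a i α) s' =
      P i (s i) α (s' i) * ∏ j ∈ Finset.univ.erase i, P j (s j) (a j) (s' j) := by
    intro α s'
    rw [jointP, ← Finset.mul_prod_erase Finset.univ _ (Finset.mem_univ i),
      Function.update_self]
    congr 1
    exact Finset.prod_congr rfl fun j hj => by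
      rw [Function.update_of_ne (Finset.ne_of_mem_erase hj)]
  have hC : ∀ (b : Bool) (t : {j // j ≠ i} → Bool),
      (∏ j ∈ Finset.univ.erase i, P j (s j) (a j) (e.symm (b, t) j)) =
      ∏ j ∈ Finset.univ.erase i, P j (s j) (a j) (e.symm (false, t) j) := by
    intro b t
    exact Finset.prod_congr rfl fun j hj => by
      rw [hesymm b t j (Finset.ne_of_mem_erase hj),
        hesymm false t j (Finset.ne_of_mem_erase hj)]
  have hsum : ∀ α : Bool,
      (∑ s' : Fin N → Bool, jointP P s (Function.update a i α) s' * V s') =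
      ∑ t : {j // j ≠ i} → Bool,
        (∏ j ∈ Finset.univ.erase i, P j (s j) (a j) (e.symm (false, t) j)) *
          (P i (s i) α true * V (e.symm (true, t)) +
           P i (s i) α false * V (e.symm (false, t))) := by
    intro α
    rw [← Equiv.sum_comp e.symm (fun s' => jointP P s (Function.update a i α) s' * V s'),
      Fintype.sum_prod_type_right]
    refine Finset.sum_congr rfl fun t _ => ?_
    rw [Fintype.sum_bool, hsplit, hsplit, hesymmi, hesymmi, hC true t]
    ring
  rw [hsum, hsum]
  apply Finset.sum_le_sum
  intro t _
  have hCpos : 0 ≤ ∏ j ∈ Finset.univ.erase i, P j (s j) (a j) (e.symm (false, t) j) :=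
    Finset.prod_nonneg fun j _ => hPnonneg _ _ _ _
  have hVle : V (e.symm (false, t)) ≤ V (e.symm (true, t)) := by
    apply hV
    intro j
    by_cases hj : j = i
    · subst hj; rw [hesymmi, hesymmi]; exact Bool.false_le true
    · rw [hesymm _ _ _ hj, hesymm _ _ _ hj]
  have h1 := hPsum i (s i) false
  have h2 := hPsum i (s i) true
  have h3 := hPmono i (s i)
  apply mul_le_mul_of_nonneg_left _ hCpos
  have hq0 : P i (s i) false false = 1 - P i (s i) false true := by linarith
  have hr0 : P i (s i) true false = 1 - P i (s i) true true := by linarith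
  rw [hq0, hr0]
  nlinarith [mul_le_mul_of_nonneg_left hVle (sub_nonneg.mpr h3)]
end

section
/- Let N ≥ 1 and suppose each per-arm transition kernel satisfies P_i(σ,1,1) ≥ P_i(σ,0,1) for every σ ∈ {0,1}. Fix a state s ∈ {0,1}^N. If V : {0,1}^N → ℝ is submodular, then the map a ↦ Σ_{s' ∈ {0,1}^N} P(s,a,s') V(s') is submodular in the action a. -/
namespace Stmt5Aux

/-- Apply the map encoded by a pair `p` (value at `false`, value at `true`). -/
def app (p : Bool × Bool) (b : Bool) : Bool := cond b p.2 p.1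

/-- Monotone-coupling weights for the per-arm kernel. -/
def Wt {N : ℕ} (P : Fin N → Bool → Bool → Bool → ℝ) (s : Fin N → Bool)
    (i : Fin N) (p : Bool × Bool) : ℝ :=
  match p with
  | (false, false) => P i (s i) true false
  | (false, true)  => P i (s i) true true - P i (s i) false true
  | (true, false)  => 0
  | (true, true)   => P i (s i) false true

lemma Wt_nonneg {N : ℕ} (P : Fin N → Bool → Bool → Bool → ℝ)
    (hPnonneg : ∀ i σ α σ', 0 ≤ P i σ α σ')
    (hPmono : ∀ i σ, P i σ false true ≤ P i σ true true)
    (s : Fin N → Bool) (i : Fin N) (p : Bool × Bool) : 0 ≤ Wt P s i p := by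
  rcases p with ⟨u, v⟩
  cases u <;> cases v <;> simp [Wt]
  · exact hPnonneg _ _ _ _
  · exact hPmono i (s i)
  · exact hPnonneg _ _ _ _

lemma kernel_eq {N : ℕ} (P : Fin N → Bool → Bool → Bool → ℝ)
    (hPsum : ∀ i σ α, P i σ α false + P i σ α true = 1)
    (s : Fin N → Bool) (i : Fin N) (α σ' : Bool) :
    P i (s i) α σ' = ∑ p : Bool × Bool, Wt P s i p * (if app p α = σ' then 1 else 0) := by
  have h0 := hPsum i (s i) false
  have h1 := hPsum i (s i) true
  cases α <;> cases σ' <;>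
    simp [Fintype.sum_prod_type, app, Wt] <;> linarith

lemma app_sup (p : Bool × Bool) (hp : p ≠ (true, false)) (b c : Bool) :
    app p (b ⊔ c) = app p b ⊔ app p c := by
  rcases p with ⟨u, v⟩
  revert hp
  cases u <;> cases v <;> cases b <;> cases c <;> decide

lemma app_inf (p : Bool × Bool) (hp : p ≠ (true, false)) (b c : Bool) :
    app p (b ⊓ c) = app p b ⊓ app p c := by
  rcases p with ⟨u, v⟩
  revert hp
  cases u <;> cases v <;> cases b <;> cases c <;> decide

lemma expand {N : ℕ} (P : Fin N → Bool → Bool → Bool → ℝ)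
    (hPsum : ∀ i σ α, P i σ α false + P i σ α true = 1)
    (s : Fin N → Bool) (V : (Fin N → Bool) → ℝ) (a : Fin N → Bool) :
    ∑ s' : Fin N → Bool, jointP P s a s' * V s'
      = ∑ G : Fin N → Bool × Bool,
          (∏ i, Wt P s i (G i)) * V (fun i => app (G i) (a i)) := by
  have step1 : ∀ s' : Fin N → Bool,
      jointP P s a s'
        = ∑ G : Fin N → Bool × Bool,
            ∏ i, Wt P s i (G i) * (if app (G i) (a i) = s' i then 1 else 0) := by
    intro s'
    unfold jointP
    have : (∏ i, P i (s i) (a i) (s' i))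
        = ∏ i, ∑ p : Bool × Bool, Wt P s i p * (if app p (a i) = s' i then 1 else 0) := by
      refine Finset.prod_congr rfl fun i _ => ?_
      exact kernel_eq P hPsum s i (a i) (s' i)
    rw [this, Finset.prod_univ_sum]
    rw [Fintype.piFinset_univ]
  calc ∑ s' : Fin N → Bool, jointP P s a s' * V s'
      = ∑ s' : Fin N → Bool, ∑ G : Fin N → Bool × Bool,
          (∏ i, Wt P s i (G i) * (if app (G i) (a i) = s' i then 1 else 0)) * V s' := by
        refine Finset.sum_congr rfl fun s' _ => ?_
        rw [step1 s', Finset.sum_mul]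
    _ = ∑ G : Fin N → Bool × Bool, ∑ s' : Fin N → Bool,
          (∏ i, Wt P s i (G i) * (if app (G i) (a i) = s' i then 1 else 0)) * V s' :=
        Finset.sum_comm
    _ = ∑ G : Fin N → Bool × Bool,
          (∏ i, Wt P s i (G i)) * V (fun i => app (G i) (a i)) := by
        refine Finset.sum_congr rfl fun G _ => ?_
        rw [Finset.sum_eq_single (fun i => app (G i) (a i))]
        · simp
        · intro b _ hb
          have hex : ∃ i, app (G i) (a i) ≠ b i := by
            by_contra h
            push_neg at h
            exact hb (funext h).symm
          obtain ⟨i, hi⟩ := hex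
          rw [Finset.prod_eq_zero (Finset.mem_univ i) (by simp [hi]), zero_mul]
        · simp

end Stmt5Aux

open Stmt5Aux in
/-- If the per-arm kernels are stochastically monotone in the action, then the
one-step expectation of a submodular function is submodular in the action. -/
theorem stmt_5 {N : ℕ} (hN : 1 ≤ N)
    (P : Fin N → Bool → Bool → Bool → ℝ)
    (hPnonneg : ∀ i σ α σ', 0 ≤ P i σ α σ')
    (hPsum : ∀ i σ α, P i σ α false + P i σ α true = 1)
    (hPmono : ∀ i σ, P i σ false true ≤ P i σ true true)
    (s : Fin N → Bool)
    (V : (Fin N → Bool) → ℝ) (hV : Submod V) :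
    Submod (fun a : Fin N → Bool => ∑ s' : Fin N → Bool, jointP P s a s' * V s') := by
  intro x y
  dsimp only
  rw [expand P hPsum s V (x ⊔ y), expand P hPsum s V (x ⊓ y),
      expand P hPsum s V x, expand P hPsum s V y,
      ← Finset.sum_add_distrib, ← Finset.sum_add_distrib]
  refine Finset.sum_le_sum fun G _ => ?_
  by_cases h : ∃ i, G i = (true, false)
  · obtain ⟨i, hi⟩ := h
    have hz : (∏ i, Wt P s i (G i)) = 0 :=
      Finset.prod_eq_zero (Finset.mem_univ i) (by simp [hi, Wt])
    simp [hz]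
  · push_neg at h
    have hcoef : 0 ≤ ∏ i, Wt P s i (G i) :=
      Finset.prod_nonneg fun i _ => Wt_nonneg P hPnonneg hPmono s i (G i)
    have hsup : (fun i => app (G i) ((x ⊔ y) i))
        = (fun i => app (G i) (x i)) ⊔ (fun i => app (G i) (y i)) := by
      funext i
      rw [Pi.sup_apply, Pi.sup_apply]
      exact app_sup _ (h i) _ _
    have hinf : (fun i => app (G i) ((x ⊓ y) i))
        = (fun i => app (G i) (x i)) ⊓ (fun i => app (G i) (y i)) := by
      funext i
      rw [Pi.inf_apply, Pi.inf_apply]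
      exact app_inf _ (h i) _ _
    rw [hsup, hinf, ← mul_add, ← mul_add]
    exact mul_le_mul_of_nonneg_left (hV _ _) hcoef
end

section
/- Let N ≥ 1, let γ ≥ 0, and suppose each per-arm transition kernel satisfies P_i(σ,1,1) ≥ P_i(σ,0,1) for every σ ∈ {0,1}. Fix a state s ∈ {0,1}^N. Suppose V : {0,1}^N → ℝ is monotone and submodular, and suppose the map a ↦ R(s,a) is monotone and submodular. Then the Q-function Q(a) := R(s,a) + γ Σ_{s' ∈ {0,1}^N} P(s,a,s') V(s') is monotone and submodular in the action a. -/
/-- Per-arm monotone coupling of the kernels `P i (s i) false ·` and `P i (s i) true ·`.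
The pair records (outcome under action 0, outcome under action 1). -/
def coupC {N : ℕ} (P : Fin N → Bool → Bool → Bool → ℝ) (s : Fin N → Bool)
    (i : Fin N) : Bool × Bool → ℝ
  | (false, false) => P i (s i) true false
  | (false, true)  => P i (s i) true true - P i (s i) false true
  | (true, false)  => 0
  | (true, true)   => P i (s i) false true

/-- Select the next state from the coupled pair according to the action. -/
def outF {N : ℕ} (a : Fin N → Bool) (t : Fin N → Bool × Bool) : Fin N → Bool :=
  fun i => if a i then (t i).2 else (t i).1

lemma coupC_nonneg {N : ℕ} (P : Fin N → Bool → Bool → Bool → ℝ)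
    (hPnonneg : ∀ i σ α σ', 0 ≤ P i σ α σ')
    (hPmono : ∀ i σ, P i σ false true ≤ P i σ true true)
    (s : Fin N → Bool) (i : Fin N) (b : Bool × Bool) : 0 ≤ coupC P s i b := by
  rcases b with ⟨(_|_), (_|_)⟩
  · exact hPnonneg i (s i) true false
  · exact sub_nonneg.2 (hPmono i (s i))
  · exact le_refl 0
  · exact hPnonneg i (s i) false true

/-- Per-coordinate marginal identity for the coupling. -/
lemma coupC_marginal {N : ℕ} (P : Fin N → Bool → Bool → Bool → ℝ)
    (hPsum : ∀ i σ α, P i σ α false + P i σ α true = 1)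
    (s : Fin N → Bool) (i : Fin N) (α σ' : Bool) :
    ∑ b ∈ Finset.univ.filter (fun b : Bool × Bool => (if α then b.2 else b.1) = σ'),
      coupC P s i b = P i (s i) α σ' := by
  have h0 := hPsum i (s i) false
  have h1 := hPsum i (s i) true
  cases α <;> cases σ' <;>
    · rw [Finset.sum_filter, Fintype.sum_prod_type]
      simp [coupC]
      try linarith

/-- The expectation of `V` under the product kernel equals its expectation under the coupling. -/
lemma boolSup (u v l h : Bool) (hlh : l ≤ h) :
    (if u ⊔ v = true then h else l) = (if u = true then h else l) ⊔ (if v = true then h else l) := by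
  revert u v l h; decide

lemma boolInf (u v l h : Bool) (hlh : l ≤ h) :
    (if u ⊓ v = true then h else l) = (if u = true then h else l) ⊓ (if v = true then h else l) := by
  revert u v l h; decide

lemma coupling_sum {N : ℕ} (P : Fin N → Bool → Bool → Bool → ℝ)
    (hPsum : ∀ i σ α, P i σ α false + P i σ α true = 1)
    (s a : Fin N → Bool) (V : (Fin N → Bool) → ℝ) :
    ∑ s' : Fin N → Bool, jointP P s a s' * V s'
      = ∑ t : Fin N → Bool × Bool, (∏ i, coupC P s i (t i)) * V (outF a t) := by
  have hfw := Finset.sum_fiberwise_eq_sum_filter Finset.univ Finset.univ (outF a)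
    (fun t : Fin N → Bool × Bool => (∏ i, coupC P s i (t i)) * V (outF a t))
  simp only [Finset.mem_univ, Finset.filter_true] at hfw
  rw [← hfw]
  refine Finset.sum_congr rfl fun s' _ => ?_
  have : ∀ t ∈ Finset.univ.filter (fun t : Fin N → Bool × Bool => outF a t = s'),
      (∏ i, coupC P s i (t i)) * V (outF a t) = (∏ i, coupC P s i (t i)) * V s' := by
    intro t ht
    rw [(Finset.mem_filter.1 ht).2]
  rw [Finset.sum_congr rfl this, ← Finset.sum_mul]
  congr 1
  have hfib : Finset.univ.filter (fun t : Fin N → Bool × Bool => outF a t = s')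
      = Fintype.piFinset (fun i =>
          Finset.univ.filter (fun b : Bool × Bool => (if a i then b.2 else b.1) = s' i)) := by
    ext t
    simp [Fintype.mem_piFinset, outF, funext_iff]
  rw [hfib, ← Finset.prod_univ_sum]
  unfold jointP
  exact Finset.prod_congr rfl fun i _ => (coupC_marginal P hPsum s i (a i) (s' i)).symm

/-- The one-step Bellman backup `Q(a) = R(s,a) + γ ∑_{s'} P(s,a,s') V(s')` of a
monotone submodular continuation value is monotone and submodular in the action. -/
theorem stmt_6 {N : ℕ} (hN : 1 ≤ N) (γ : ℝ) (hγ0 : 0 ≤ γ)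
    (P : Fin N → Bool → Bool → Bool → ℝ)
    (hPnonneg : ∀ i σ α σ', 0 ≤ P i σ α σ')
    (hPsum : ∀ i σ α, P i σ α false + P i σ α true = 1)
    (hPmono : ∀ i σ, P i σ false true ≤ P i σ true true)
    (s : Fin N → Bool)
    (R : (Fin N → Bool) → (Fin N → Bool) → ℝ)
    (hRmono : Monotone (R s)) (hRsub : Submod (R s))
    (V : (Fin N → Bool) → ℝ) (hVmono : Monotone V) (hVsub : Submod V) :
    Monotone (fun a : Fin N → Bool =>
        R s a + γ * ∑ s' : Fin N → Bool, jointP P s a s' * V s') ∧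
    Submod (fun a : Fin N → Bool =>
        R s a + γ * ∑ s' : Fin N → Bool, jointP P s a s' * V s') := by
  set W : (Fin N → Bool) → ℝ :=
    fun a => ∑ s' : Fin N → Bool, jointP P s a s' * V s' with hW
  have hWc : ∀ a, W a = ∑ t : Fin N → Bool × Bool,
      (∏ i, coupC P s i (t i)) * V (outF a t) := fun a => coupling_sum P hPsum s a V
  have hwnn : ∀ t : Fin N → Bool × Bool, 0 ≤ ∏ i, coupC P s i (t i) := fun t =>
    Finset.prod_nonneg fun i _ => coupC_nonneg P hPnonneg hPmono s i (t i)
  have hbad : ∀ t : Fin N → Bool × Bool, ¬ (∀ i, (t i).1 ≤ (t i).2) →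
      (∏ i, coupC P s i (t i)) = 0 := by
    intro t ht
    push_neg at ht
    obtain ⟨i, hi⟩ := ht
    refine Finset.prod_eq_zero (Finset.mem_univ i) ?_
    have hti : t i = (true, false) := by
      rcases h : t i with ⟨l, h2⟩
      rw [h] at hi
      cases l <;> cases h2 <;> first | rfl | exact absurd hi (by decide)
    rw [hti]; rfl
  -- monotonicity of W
  have hWmono : Monotone W := by
    intro a b hab
    rw [hWc a, hWc b]
    refine Finset.sum_le_sum fun t _ => ?_
    by_cases hg : ∀ i, (t i).1 ≤ (t i).2
    · refine mul_le_mul_of_nonneg_left (hVmono fun i => ?_) (hwnn t)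
      simp only [outF]
      by_cases hai : a i = true
      · rw [hai, if_pos rfl, (by simpa using hab i hai : b i = true), if_pos rfl]
      · simp only [Bool.not_eq_true] at hai
        rw [hai]
        cases hbi : b i
        · simp
        · simpa using hg i
    · rw [hbad t hg]; simp
  -- submodularity of W
  have hWsub : ∀ x y, W (x ⊔ y) + W (x ⊓ y) ≤ W x + W y := by
    intro x y
    simp only [hWc]
    rw [← Finset.sum_add_distrib, ← Finset.sum_add_distrib]
    refine Finset.sum_le_sum fun t _ => ?_
    by_cases hg : ∀ i, (t i).1 ≤ (t i).2
    · have hsup : outF (x ⊔ y) t = outF x t ⊔ outF y t := by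
        funext i
        have hgi := hg i
        simp only [outF, Pi.sup_apply]
        exact boolSup (x i) (y i) _ _ hgi
      have hinf : outF (x ⊓ y) t = outF x t ⊓ outF y t := by
        funext i
        have hgi := hg i
        simp only [outF, Pi.inf_apply]
        exact boolInf (x i) (y i) _ _ hgi
      rw [hsup, hinf, ← mul_add, ← mul_add]
      exact mul_le_mul_of_nonneg_left (hVsub (outF x t) (outF y t)) (hwnn t)
    · rw [hbad t hg]; simp
  constructor
  · intro a b hab
    have h1 := hRmono hab
    have h2 := mul_le_mul_of_nonneg_left (hWmono hab) hγ0
    simpa using add_le_add h1 h2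
  · intro x y
    have h1 := hRsub x y
    have h2 := mul_le_mul_of_nonneg_left (hWsub x y) hγ0
    simp only []
    have h2' : γ * W (x ⊔ y) + γ * W (x ⊓ y) ≤ γ * W x + γ * W y := by
      rw [← mul_add, ← mul_add]; exact h2
    show R s (x ⊔ y) + γ * W (x ⊔ y) + (R s (x ⊓ y) + γ * W (x ⊓ y))
        ≤ R s x + γ * W x + (R s y + γ * W y)
    linarith
end
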